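/- Let (X,d,T) be a topological dynamical system (continuous L-action on a compact metric space) such that (i) every invariant measure is entropy-approximable, and (ii) the entropy map is upper semi-continuous on M(X,T). Then for every α ∈ [0, h(T)), the set M_e(X,T,α) of ergodic measures with entropy exactly α is residual in M^α(X,T) = {μ ∈ M(X,T) : h_μ(T) ≥ α}. -/

import Mathlib

open MeasureTheory
open scoped ENNReal NNReal
open Filter Topology Set

open Set Filter Topology in
private lemma isGδ_preimage_aux {Y Z : Type*} [TopologicalSpace Y] [TopologicalSpace Z] {s : Set Z}
    (hs : IsGδ s) {f : Y → Z} (hf : Continuous f) : IsGδ (f ⁻¹' s) := by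
  obtain ⟨T, hTo, hTc, rfl⟩ := hs
  rw [preimage_sInter]
  exact IsGδ.biInter hTc fun t ht => ((hTo t ht).preimage hf).isGδ

/-- If every invariant measure is entropy-approximable and the entropy map is upper
semi-continuous on `M(X,T)`, then for every `α ∈ [0,h(T))` the set of ergodic measures with
entropy exactly `α` is residual in `M^α(X,T) = {μ ∈ M(X,T) : h_μ(T) ≥ α}`. -/
theorem stmt7 {X : Type*} [MetricSpace X] [CompactSpace X] [MeasurableSpace X] [BorelSpace X]
    (d : ℕ) (hd : 0 < d)
    (T : (Fin d → ℕ) → X → X) (hT0 : T 0 = id) (hTadd : ∀ a b, T (a + b) = T a ∘ T b)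
    (hTc : ∀ i, Continuous (T i))
    -- the space of invariant measures and the ergodic measures
    (MT Erg : Set (ProbabilityMeasure X))
    (hMT : MT = {μ : ProbabilityMeasure X |
      ∀ i, MeasurePreserving (T i) (μ : Measure X) (μ : Measure X)})
    (hErgMT : Erg ⊆ MT) (hErgGδ : IsGδ Erg)
    -- the metric entropy map, upper semi-continuous and affine
    (h : ProbabilityMeasure X → ℝ≥0∞)
    (husc : UpperSemicontinuousOn h MT)
    (haff : ∀ (a : ℝ≥0), a ≤ 1 → ∀ ξ μ ν : ProbabilityMeasure X, μ ∈ MT → ν ∈ MT →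
      (ξ : Measure X) = a • (μ : Measure X) + (1 - a) • (ν : Measure X) →
      h ξ = (a : ℝ≥0∞) * h μ + ((1 - a : ℝ≥0) : ℝ≥0∞) * h ν)
    -- invariant measures are closed under convex combinations
    (hconvex : ∀ (a : ℝ≥0), a ≤ 1 → ∀ μ ν : ProbabilityMeasure X, μ ∈ MT → ν ∈ MT →
      ∃ ξ ∈ MT, (ξ : Measure X) = a • (μ : Measure X) + (1 - a) • (ν : Measure X))
    -- topological entropy of compact invariant subsets and the variational principle
    (hTop : Set X → ℝ≥0∞) (htop : ℝ≥0∞)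
    (hvar : htop = ⨆ μ ∈ MT, h μ)
    (hvarErg : htop = ⨆ μ ∈ Erg, h μ)
    (hsubvar : ∀ Δ : Set X, Δ.Nonempty → IsCompact Δ → (∀ i, T i '' Δ ⊆ Δ) →
      hTop Δ = ⨆ μ ∈ {ν ∈ Erg | (ν : Measure X) Δ = 1}, h μ)
    -- every invariant measure is entropy-approximable
    (happrox : ∀ μ ∈ MT, ∀ U ∈ nhds μ, ∀ c : ℝ≥0∞, 0 < c → c < h μ → ∀ β : ℝ≥0∞, 0 < β →
      ∃ Δ : Set X, IsCompact Δ ∧ (∀ i, T i '' Δ ⊆ Δ) ∧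
        {ν ∈ MT | (ν : Measure X) Δ = 1} ⊆ U ∧ c < hTop Δ ∧ hTop Δ < c + β)
    (α : ℝ≥0∞) (hα : α < htop) :
    {μ : {μ : ProbabilityMeasure X // μ ∈ MT ∧ α ≤ h μ} | (μ : ProbabilityMeasure X) ∈ Erg ∧
        h (μ : ProbabilityMeasure X) = α}
      ∈ residual {μ : ProbabilityMeasure X // μ ∈ MT ∧ α ≤ h μ} := by
  have hαt : α ≠ ⊤ := hα.ne_top
  -- Key density step, for measures of entropy strictly bigger than `α`.
  have key : ∀ μ : ProbabilityMeasure X, μ ∈ MT → α < h μ → ∀ U ∈ nhds μ, ∀ ε : ℝ≥0∞, 0 < ε →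
      ∃ ν, ν ∈ Erg ∧ ν ∈ MT ∧ ν ∈ U ∧ α < h ν ∧ h ν < α + ε := by
    intro μ hμ hαμ U hU ε hε
    have hm : α < min (h μ) (α + ε) := lt_min hαμ (ENNReal.lt_add_right hαt hε.ne')
    obtain ⟨c₂, hc₂a, hc₂m⟩ := exists_between hm
    obtain ⟨c₁, hc₁a, hc₁₂⟩ := exists_between hc₂a
    obtain ⟨c₃, hc₂₃, hc₃m⟩ := exists_between hc₂m
    have hc₁h : c₁ < h μ := (hc₁₂.trans hc₂m).trans_le (min_le_left _ _)
    have hc₂h : c₂ < h μ := hc₂m.trans_le (min_le_left _ _)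
    have hc₂ε : c₂ < α + ε := hc₂m.trans_le (min_le_right _ _)
    have hc₃ε : c₃ < α + ε := hc₃m.trans_le (min_le_right _ _)
    obtain ⟨Δ₁, hΔ₁c, hΔ₁i, hΔ₁U, hΔ₁l, hΔ₁u⟩ :=
      happrox μ hμ U hU c₁ ((zero_le : (0:ℝ≥0∞) ≤ α).trans_lt hc₁a) hc₁h (c₂ - c₁) (tsub_pos_of_lt hc₁₂)
    obtain ⟨Δ₂, hΔ₂c, hΔ₂i, hΔ₂U, hΔ₂l, hΔ₂u⟩ :=
      happrox μ hμ U hU c₂ ((zero_le : (0:ℝ≥0∞) ≤ α).trans_lt hc₂a) hc₂h (c₃ - c₂) (tsub_pos_of_lt hc₂₃)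
    rw [add_tsub_cancel_of_le hc₁₂.le] at hΔ₁u
    rw [add_tsub_cancel_of_le hc₂₃.le] at hΔ₂u
    have hΔ : ∃ Δ : Set X, Δ.Nonempty ∧ IsCompact Δ ∧ (∀ i, T i '' Δ ⊆ Δ) ∧
        ({ν ∈ MT | (ν : Measure X) Δ = 1} ⊆ U) ∧ α < hTop Δ ∧ hTop Δ < α + ε := by
      rcases Δ₁.eq_empty_or_nonempty with h1 | h1
      · rcases Δ₂.eq_empty_or_nonempty with h2 | h2
        · rw [h1] at hΔ₁u; rw [h2] at hΔ₂l
          exact absurd (hΔ₂l.trans hΔ₁u) (lt_irrefl _)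
        · exact ⟨Δ₂, h2, hΔ₂c, hΔ₂i, hΔ₂U, hc₂a.trans hΔ₂l, hΔ₂u.trans hc₃ε⟩
      · exact ⟨Δ₁, h1, hΔ₁c, hΔ₁i, hΔ₁U, hc₁a.trans hΔ₁l, hΔ₁u.trans hc₂ε⟩
    obtain ⟨Δ, hne, hcomp, hinv, hUsub, hl, hu⟩ := hΔ
    rw [hsubvar Δ hne hcomp hinv] at hl hu
    simp only [lt_iSup_iff] at hl
    obtain ⟨ν, hνmem, hνl⟩ := hl
    have hνu : h ν < α + ε :=
      (le_iSup₂ (f := fun ν (_ : ν ∈ {ν ∈ Erg | (ν : Measure X) Δ = 1}) => h ν) ν hνmem).trans_lt hu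
    have hνErg : ν ∈ Erg := hνmem.1
    have hνMT : ν ∈ MT := hErgMT hνErg
    exact ⟨ν, hνErg, hνMT, hUsub ⟨hνMT, hνmem.2⟩, hνl, hνu⟩
  -- Extended density step: works for all measures with entropy at least `α`.
  have key' : ∀ μ : ProbabilityMeasure X, μ ∈ MT → α ≤ h μ → ∀ U : Set (ProbabilityMeasure X),
      IsOpen U → μ ∈ U → ∀ ε : ℝ≥0∞, 0 < ε →
      ∃ ν, ν ∈ Erg ∧ ν ∈ MT ∧ ν ∈ U ∧ α < h ν ∧ h ν < α + ε := by
    intro μ hμ hαμ U hUo hμU ε hε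
    rcases lt_or_eq_of_le hαμ with hlt | heq
    · exact key μ hμ hlt U (hUo.mem_nhds hμU) ε hε
    -- here `h μ = α`; perturb `μ` by mixing with a measure of larger entropy
    obtain ⟨ρ, hρMT, hρα⟩ : ∃ ρ, ρ ∈ MT ∧ α < h ρ := by
      rw [hvar] at hα
      simpa only [lt_iSup_iff, exists_prop] using hα
    set a : ℕ → ℝ≥0 := fun k => 1 - ((k : ℝ≥0) + 1)⁻¹ with ha
    have hinvle : ∀ k : ℕ, ((k : ℝ≥0) + 1)⁻¹ ≤ 1 := by
      intro k; rw [inv_le_one_iff₀]; right; simp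
    have hale : ∀ k, a k ≤ 1 := fun k => tsub_le_self
    have hb : ∀ k, (1 : ℝ≥0) - a k = ((k : ℝ≥0) + 1)⁻¹ := fun k =>
      tsub_tsub_cancel_of_le (hinvle k)
    choose ξ hξMT hξeq using fun k => hconvex (a k) (hale k) μ ρ hμ hρMT
    have hhξ : ∀ k, α < h (ξ k) := by
      intro k
      have hbne : (1 : ℝ≥0) - a k ≠ 0 := by
        rw [hb k]; positivity
      have hform := haff (a k) (hale k) (ξ k) μ ρ hμ hρMT (hξeq k)
      rw [← heq] at hform
      rw [hform]
      have hsum : ((a k : ℝ≥0∞)) + ((1 - a k : ℝ≥0) : ℝ≥0∞) = 1 := by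
        rw [← ENNReal.coe_add, add_tsub_cancel_of_le (hale k)]; simp
      have hα1 : α = (a k : ℝ≥0∞) * α + ((1 - a k : ℝ≥0) : ℝ≥0∞) * α := by
        rw [← add_mul, hsum, one_mul]
      nth_rewrite 1 [hα1]
      refine ENNReal.add_lt_add_left (ENNReal.mul_ne_top ENNReal.coe_ne_top hαt) ?_
      exact (ENNReal.mul_lt_mul_iff_right (by exact_mod_cast hbne) ENNReal.coe_ne_top).mpr hρα
    -- the mixtures converge to `μ`
    have htend : Tendsto ξ atTop (𝓝 μ) := by
      rw [ProbabilityMeasure.tendsto_iff_forall_integral_tendsto]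
      intro f
      have hint : ∀ k, ∫ x, f x ∂(ξ k : Measure X) =
          (1 - ((k:ℝ)+1)⁻¹) * ∫ x, f x ∂(μ : Measure X) +
            ((k:ℝ)+1)⁻¹ * ∫ x, f x ∂(ρ : Measure X) := by
        intro k
        rw [hξeq k, integral_add_measure (f.integrable _) (f.integrable _),
          integral_smul_nnreal_measure, integral_smul_nnreal_measure]
        have hcoe1 : ((a k : ℝ≥0) : ℝ) = 1 - ((k:ℝ)+1)⁻¹ := by
          rw [ha]
          simp only
          rw [NNReal.coe_sub (hinvle k)]
          push_cast; ring
        have hcoe2 : ((1 - a k : ℝ≥0) : ℝ) = ((k:ℝ)+1)⁻¹ := by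
          rw [hb k]; push_cast; ring
        simp [NNReal.smul_def, hcoe1, hcoe2]
      simp only [hint]
      have h0 : Tendsto (fun k : ℕ => ((k:ℝ)+1)⁻¹) atTop (𝓝 0) := by
        simpa only [one_div] using tendsto_one_div_add_atTop_nhds_zero_nat (𝕜 := ℝ)
      have h1 : Tendsto (fun k : ℕ => (1 - ((k:ℝ)+1)⁻¹) * ∫ x, f x ∂(μ : Measure X) +
          ((k:ℝ)+1)⁻¹ * ∫ x, f x ∂(ρ : Measure X)) atTop
          (𝓝 ((1 - 0) * ∫ x, f x ∂(μ : Measure X) + 0 * ∫ x, f x ∂(ρ : Measure X))) :=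
        (((tendsto_const_nhds (x := (1:ℝ))).sub h0).mul tendsto_const_nhds).add
          (h0.mul tendsto_const_nhds)
      simpa using h1
    obtain ⟨k, hk⟩ := (htend.eventually (hUo.eventually_mem hμU)).exists
    exact key (ξ k) (hξMT k) (hhξ k) U (hUo.mem_nhds hk) ε hε
  -- now work in the subspace
  set Sb := {μ : ProbabilityMeasure X // μ ∈ MT ∧ α ≤ h μ} with hSb
  -- the ergodic measures are residual in the subspace
  have hErg' : {μ : Sb | (μ : ProbabilityMeasure X) ∈ Erg} ∈ residual Sb := by
    apply residual_of_dense_Gδ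
    · exact isGδ_preimage_aux hErgGδ continuous_subtype_val
    · rw [dense_iff_inter_open]
      intro V hV hVne
      obtain ⟨x, hxV⟩ := hVne
      obtain ⟨W, hWo, hWV⟩ := isOpen_induced_iff.mp hV
      have hxW : (x : ProbabilityMeasure X) ∈ W := by
        rw [← hWV] at hxV; exact hxV
      obtain ⟨ν, hνE, hνMT, hνW, hνl, _⟩ := key' x.1 x.2.1 x.2.2 W hWo hxW 1 one_pos
      refine ⟨⟨ν, hνMT, hνl.le⟩, ?_, hνE⟩
      rw [← hWV]; exact hνW
  -- the sets of entropy below `α + 1/(n+1)` are open dense in the subspace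
  have hA : ∀ n : ℕ, {μ : Sb | h (μ : ProbabilityMeasure X) < α + ((n : ℝ≥0∞) + 1)⁻¹}
      ∈ residual Sb := by
    intro n
    have hεpos : (0:ℝ≥0∞) < ((n : ℝ≥0∞) + 1)⁻¹ := ENNReal.inv_pos.mpr (by simp)
    apply residual_of_dense_open
    · rw [isOpen_iff_mem_nhds]
      intro x hx
      have husc' := husc x.1 x.2.1 (α + ((n : ℝ≥0∞) + 1)⁻¹) hx
      rw [eventually_nhdsWithin_iff] at husc'
      have hpre : Subtype.val ⁻¹' {z : ProbabilityMeasure X |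
          z ∈ MT → h z < α + ((n : ℝ≥0∞) + 1)⁻¹} ∈ 𝓝 x :=
        continuous_subtype_val.continuousAt.preimage_mem_nhds husc'
      refine Filter.mem_of_superset hpre ?_
      intro y hy
      exact hy y.2.1
    · rw [dense_iff_inter_open]
      intro V hV hVne
      obtain ⟨x, hxV⟩ := hVne
      obtain ⟨W, hWo, hWV⟩ := isOpen_induced_iff.mp hV
      have hxW : (x : ProbabilityMeasure X) ∈ W := by
        rw [← hWV] at hxV; exact hxV
      obtain ⟨ν, hνE, hνMT, hνW, hνl, hνu⟩ := key' x.1 x.2.1 x.2.2 W hWo hxW _ hεpos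
      refine ⟨⟨ν, hνMT, hνl.le⟩, ?_, hνu⟩
      rw [← hWV]; exact hνW
  -- combine
  have hall : ({μ : Sb | (μ : ProbabilityMeasure X) ∈ Erg} ∩
      ⋂ n : ℕ, {μ : Sb | h (μ : ProbabilityMeasure X) < α + ((n : ℝ≥0∞) + 1)⁻¹})
      ∈ residual Sb :=
    Filter.inter_mem hErg' ((countable_iInter_mem).mpr hA)
  refine Filter.mem_of_superset hall ?_
  rintro μ ⟨hμE, hμA⟩
  refine ⟨hμE, le_antisymm ?_ μ.2.2⟩
  by_contra hc
  push_neg at hc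
  obtain ⟨n, hn⟩ := ENNReal.exists_inv_nat_lt (tsub_pos_of_lt hc).ne'
  have hinv : ((n : ℝ≥0∞) + 1)⁻¹ < h (μ : ProbabilityMeasure X) - α :=
    (ENNReal.inv_le_inv.mpr le_self_add).trans_lt hn
  have h2 : α + ((n : ℝ≥0∞) + 1)⁻¹ < α + (h (μ : ProbabilityMeasure X) - α) :=
    ENNReal.add_lt_add_left hαt hinv
  rw [add_tsub_cancel_of_le hc.le] at h2
  have := Set.mem_iInter.mp hμA n
  exact lt_irrefl _ (this.trans h2)
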